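/- Let p be a prime, q > 1 a power of p, k ≥ 2 and m ≥ 1 integers. Then for every integer i with 0 ≤ i ≤ k−2 and every integer j with 0 ≤ j ≤ k+p^m−2: if 0 ≤ j ≤ k−2 then U^{(k+p^m)}_{i,j} ≡ U^{(k)}_{i,j} (mod t^{p^m}) in 𝔽_q[t], and if j ≥ k−1 then U^{(k+p^m)}_{i,j} ≡ 0 (mod t^{p^m}). (This is the assertion on the top k−1 rows in the block congruence U^{(k+p^m)} ≡ [[U^{(k)}, O, O], [C, t^{k−1}D, O]] mod t^{p^m} for suitable glissando matrices C and D.) -/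

import Mathlib

open Polynomial

noncomputable section DrinfeldGM

/-- Integer-argument binomial coefficient `C(c,d)`, equal to `0` whenever any of
`c`, `d`, `c - d` is negative. -/
def intChoose (c d : ℤ) : ℤ :=
  if 0 ≤ c ∧ 0 ≤ d ∧ d ≤ c then (Nat.choose c.toNat d.toNat : ℤ) else 0

/-- The `(i,j)` entry of the matrix of the `U`-operator on `S_k(Γ₁(t))` in the
Bandini–Valentino basis (here `t` is the polynomial variable `X`).  For `i = j` it is
`(-t)^j C(k-2-j, j)`; for `i = j + h(q-1)` with `h ≠ 0` (equivalently `(q-1) ∣ i - j`,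
`i ≠ j`, in which case `h(q-1) = i - j`) it is
`-t^j (C(k-2-i, j-i) + (-1)^{j+1} C(k-2-i, j))`; and it is `0` otherwise. -/
def Uent (F : Type*) [Field F] (q k : ℕ) (i j : ℕ) : Polynomial F :=
  if i = j then
    (-Polynomial.X : Polynomial F) ^ j * ((intChoose ((k : ℤ) - 2 - (j : ℤ)) (j : ℤ) : ℤ) : Polynomial F)
  else if ((q : ℤ) - 1) ∣ ((i : ℤ) - (j : ℤ)) then
    -((Polynomial.X : Polynomial F) ^ j *
      ((intChoose ((k : ℤ) - 2 - (i : ℤ)) ((j : ℤ) - (i : ℤ)) +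
        (-1) ^ (j + 1) * intChoose ((k : ℤ) - 2 - (i : ℤ)) (j : ℤ) : ℤ) : Polynomial F))
  else 0

/-- The representing matrix `U^{(k)} ∈ M_{k-1}(𝔽_q[t])` of the `U`-operator on
`S_k(Γ₁(t))`, rows and columns indexed by `0, …, k-2`. -/
def Umat (F : Type*) [Field F] (q k : ℕ) :
    Matrix (Fin (k - 1)) (Fin (k - 1)) (Polynomial F) :=
  Matrix.of fun i j => Uent F q k (i : ℕ) (j : ℕ)

/-- A matrix over `𝔽_q[[t]]` is *glissando* if every entry of its `j`-th column is an
`𝔽_q`-multiple of `t^j`. -/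
def Glissando {F : Type*} [Field F] {m n : ℕ}
    (B : Matrix (Fin m) (Fin n) (PowerSeries F)) : Prop :=
  ∀ i j, ∃ c : F, B i j = (PowerSeries.C c : PowerSeries F) * (PowerSeries.X : PowerSeries F) ^ (j : ℕ)

/-- The inclusion `𝔽_q[t] → 𝔽_q[[t]]`. -/
def polyToPS (F : Type*) [Field F] : Polynomial F →+* PowerSeries F :=
  Polynomial.coeToPowerSeries.ringHom

/-- The inclusion of `𝔽_q[[t]]` into a fixed algebraic closure `K̄` of `K = 𝔽_q((t))`. -/
def psToKbar (F : Type*) [Field F] :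
    PowerSeries F →+* AlgebraicClosure (LaurentSeries F) :=
  (algebraMap (LaurentSeries F) (AlgebraicClosure (LaurentSeries F))).comp
    (algebraMap (PowerSeries F) (LaurentSeries F))

/-- The inclusion `𝔽_q[t] → K̄`. -/
def polyToKbar (F : Type*) [Field F] :
    Polynomial F →+* AlgebraicClosure (LaurentSeries F) :=
  (psToKbar F).comp (polyToPS F)

/-- The element `t` of `K̄`. -/
def tbar (F : Type*) [Field F] : AlgebraicClosure (LaurentSeries F) :=
  psToKbar F PowerSeries.X

/-- Integrality over `𝔽_q[[t]]` of an element of `K̄`. -/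
def IntegralPS (F : Type*) [Field F] (x : AlgebraicClosure (LaurentSeries F)) : Prop :=
  letI : Algebra (PowerSeries F) (AlgebraicClosure (LaurentSeries F)) := (psToKbar F).toAlgebra
  IsIntegral (PowerSeries F) x

/-- `HasVal F λ α` says that `λ ∈ K̄` is nonzero and has valuation `α` for the unique
extension `v` to `K̄` of the `t`-adic valuation with `v(t) = 1`: writing `α = a/b` with
`b > 0`, this means that both `λ^b/t^a` and `t^a/λ^b` are integral over `𝔽_q[[t]]`. -/
def HasVal (F : Type*) [Field F] (lam : AlgebraicClosure (LaurentSeries F)) (α : ℚ) : Prop :=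
  lam ≠ 0 ∧ ∃ a b : ℤ, 0 < b ∧ α = (a : ℚ) / (b : ℚ) ∧
    IntegralPS F (lam ^ b / tbar F ^ a) ∧ IntegralPS F (tbar F ^ a / lam ^ b)

/-- `d(k, α)`: the number of roots `λ` of `det(X·I - U^{(k)})` in `K̄` with `v(λ) = α`,
counted with multiplicity.  This is the dimension of the slope-`α` generalized eigenspace
of the `U`-operator on `S_k(Γ₁(t))`. -/
def dDim (F : Type*) [Field F] (q k : ℕ) (α : ℚ) : ℕ :=
  letI := Classical.decPred fun lam : AlgebraicClosure (LaurentSeries F) => HasVal F lam α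
  Multiset.card <| Multiset.filter (fun lam => HasVal F lam α) <|
    (((Umat F q k).charpoly).map (polyToKbar F)).roots

/-- `det(I - t^l X B)` for a square matrix `B` over `𝔽_q[[t]]`, as a polynomial in `X`
over `𝔽_q[[t]]`. -/
def charSeriesTw (F : Type*) [Field F] {m : ℕ} (l : ℕ)
    (B : Matrix (Fin m) (Fin m) (PowerSeries F)) : Polynomial (PowerSeries F) :=
  Matrix.det (1 - (Polynomial.C ((PowerSeries.X : PowerSeries F) ^ l) * Polynomial.X) •
    B.map Polynomial.C)

/-- `det(I - X B)` for a square matrix `B` over `𝔽_q[[t]]`. -/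
def charSeriesPS (F : Type*) [Field F] {m : ℕ}
    (B : Matrix (Fin m) (Fin m) (PowerSeries F)) : Polynomial (PowerSeries F) :=
  Matrix.det (1 - (Polynomial.X : Polynomial (PowerSeries F)) • B.map Polynomial.C)

/-- `P^{(k)}(X) = det(I - X·U^{(k)}) ∈ 𝔽_q[t][X]`. -/
def Pser (F : Type*) [Field F] (q k : ℕ) : Polynomial (Polynomial F) :=
  Matrix.det (1 - (Polynomial.X : Polynomial (Polynomial F)) • (Umat F q k).map Polynomial.C)


lemma key_nat (R : Type*) [CommRing R] (p : ℕ) [Fact p.Prime] [CharP R p]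
    (m n j : ℕ) (hj : j < p ^ m) :
    (((n + p ^ m).choose j : ℕ) : R) = ((n.choose j : ℕ) : R) := by
  have h : ((X + 1 : Polynomial R) ^ (n + p ^ m)).coeff j
      = ((X + 1 : Polynomial R) ^ n).coeff j := by
    rw [pow_add, add_pow_char_pow, one_pow, mul_add, mul_one, Polynomial.coeff_add,
      Polynomial.coeff_mul_X_pow', if_neg (Nat.not_le.mpr hj), zero_add]
  simpa [Polynomial.coeff_X_add_one_pow] using h

lemma cast_intChoose (R : Type*) [CommRing R] (p : ℕ) [Fact p.Prime] [CharP R p]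
    (m : ℕ) (c d : ℤ) (hc : 0 ≤ c) (hd : d < (p : ℤ) ^ m) :
    ((intChoose (c + (p : ℤ) ^ m) d : ℤ) : R) = ((intChoose c d : ℤ) : R) := by
  rw [show ((p : ℤ)) ^ m = ((p ^ m : ℕ) : ℤ) by push_cast; ring] at hd ⊢
  by_cases hd0 : 0 ≤ d
  · have h1 : intChoose (c + ((p ^ m : ℕ) : ℤ)) d
        = ((c.toNat + p ^ m).choose d.toNat : ℤ) := by
      rw [intChoose, if_pos ⟨by omega, hd0, by omega⟩]
      congr 2
      omega
    rw [h1]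
    push_cast
    rw [key_nat R p m c.toNat d.toNat (by omega)]
    rw [intChoose]
    by_cases hdc : d ≤ c
    · rw [if_pos ⟨hc, hd0, hdc⟩]; push_cast; ring
    · rw [if_neg (by tauto), Nat.choose_eq_zero_of_lt (by omega)]
      simp
  · rw [intChoose, intChoose, if_neg (by tauto), if_neg (by tauto)]

lemma Uent_X_pow_dvd (F : Type*) [Field F] (q k i j : ℕ) :
    (X : Polynomial F) ^ j ∣ Uent F q k i j := by
  rw [Uent]
  split_ifs
  · rw [neg_pow]
    exact (dvd_mul_left _ _).mul_right _
  · exact (dvd_neg).mpr (dvd_mul_right _ _)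
  · exact dvd_zero _

/-- The top `k-1` rows of the block congruence
`U^{(k+p^m)} ≡ [[U^{(k)}, O, O], [C, t^{k-1}D, O]] (mod t^{p^m})`: for every row
`i ≤ k-2` and column `j ≤ k+p^m-2`, if `j ≤ k-2` then
`U^{(k+p^m)}_{i,j} ≡ U^{(k)}_{i,j} (mod t^{p^m})`, and if `j ≥ k-1` then
`U^{(k+p^m)}_{i,j} ≡ 0 (mod t^{p^m})`. -/
theorem Umat_top_rows_mod_t_pow
    (p q : ℕ) (hp : p.Prime) (hq : ∃ e : ℕ, 1 ≤ e ∧ q = p ^ e)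
    (F : Type) [Field F] [Fintype F] (hF : Fintype.card F = q)
    (k m : ℕ) (hk : 2 ≤ k) (hm : 1 ≤ m)
    (i j : Fin (k + p ^ m - 1)) (hi : (i : ℕ) ≤ k - 2) :
    (∀ j' : Fin (k - 1), (j : ℕ) = (j' : ℕ) → ∀ i' : Fin (k - 1), (i : ℕ) = (i' : ℕ) →
      (Polynomial.X : Polynomial F) ^ (p ^ m) ∣
        (Umat F q (k + p ^ m) i j - Umat F q k i' j')) ∧
    (k - 1 ≤ (j : ℕ) →
      (Polynomial.X : Polynomial F) ^ (p ^ m) ∣ Umat F q (k + p ^ m) i j) := by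
  obtain ⟨e, he, hqe⟩ := hq
  haveI : Fact p.Prime := ⟨hp⟩
  have hring : ringChar F = p := by
    obtain ⟨n, hrp, hcard⟩ := FiniteField.card F (ringChar F)
    have h1 : ringChar F ∣ p ^ e := by
      rw [← hqe, ← hF, hcard]
      exact dvd_pow_self _ (by exact_mod_cast n.ne_zero)
    exact (Nat.prime_dvd_prime_iff_eq hrp hp).mp (hrp.dvd_of_dvd_pow h1)
  haveI : CharP F p := hring ▸ ringChar.charP F
  have hpm : ((p ^ m : ℕ) : ℤ) = (p : ℤ) ^ m := by push_cast; ring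
  have hcong : ∀ (x : ℕ) (y : ℤ), x ≤ k - 2 → y < (p : ℤ) ^ m →
      ((intChoose (((k + p ^ m : ℕ) : ℤ) - 2 - (x : ℤ)) y : ℤ) : Polynomial F)
        = ((intChoose ((k : ℤ) - 2 - (x : ℤ)) y : ℤ) : Polynomial F) := by
    intro x y hx hy
    have htop : ((k + p ^ m : ℕ) : ℤ) - 2 - (x : ℤ)
        = ((k : ℤ) - 2 - (x : ℤ)) + (p : ℤ) ^ m := by push_cast; ring
    rw [htop, cast_intChoose (Polynomial F) p m _ y (by omega) hy]
  constructor
  · intro j' hj' i' hi'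
    simp only [Umat, Matrix.of_apply]
    rw [← hj', ← hi']
    have hjk : (j : ℕ) ≤ k - 2 := by have := j'.isLt; omega
    by_cases hc : p ^ m ≤ (j : ℕ)
    · exact dvd_sub ((pow_dvd_pow X hc).trans (Uent_X_pow_dvd F q _ _ _))
        ((pow_dvd_pow X hc).trans (Uent_X_pow_dvd F q _ _ _))
    · have hjlt : (((j : ℕ) : ℤ)) < (p : ℤ) ^ m := by rw [← hpm]; omega
      have heq : Uent F q (k + p ^ m) (i : ℕ) (j : ℕ) = Uent F q k (i : ℕ) (j : ℕ) := by
        rw [Uent, Uent]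
        by_cases hij : (i : ℕ) = (j : ℕ)
        · rw [if_pos hij, if_pos hij, hcong (j : ℕ) ((j : ℕ) : ℤ) hjk hjlt]
        · rw [if_neg hij, if_neg hij]
          by_cases hdvd : ((q : ℤ) - 1) ∣ (((i : ℕ) : ℤ) - ((j : ℕ) : ℤ))
          · rw [if_pos hdvd, if_pos hdvd]
            have hjlt' : (((j : ℕ) : ℤ) - ((i : ℕ) : ℤ)) < (p : ℤ) ^ m := by
              rw [← hpm]; omega
            simp only [Int.cast_add, Int.cast_mul, Int.cast_pow, Int.cast_neg, Int.cast_one]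
            rw [hcong (i : ℕ) _ hi hjlt', hcong (i : ℕ) _ hi hjlt]
          · rw [if_neg hdvd, if_neg hdvd]
      rw [heq, sub_self]
      exact dvd_zero _
  · intro hkj
    by_cases hc : p ^ m ≤ (j : ℕ)
    · exact (pow_dvd_pow X hc).trans (Uent_X_pow_dvd F q _ _ _)
    · have hz : Uent F q (k + p ^ m) (i : ℕ) (j : ℕ) = 0 := by
        rw [Uent, if_neg (by omega)]
        by_cases hdvd : ((q : ℤ) - 1) ∣ (((i : ℕ) : ℤ) - ((j : ℕ) : ℤ))
        · rw [if_pos hdvd]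
          have hjlt : (((j : ℕ) : ℤ)) < (p : ℤ) ^ m := by rw [← hpm]; omega
          have hjlt' : (((j : ℕ) : ℤ) - ((i : ℕ) : ℤ)) < (p : ℤ) ^ m := by
            rw [← hpm]; omega
          have hz1 : intChoose ((k : ℤ) - 2 - ((i : ℕ) : ℤ)) (((j : ℕ) : ℤ) - ((i : ℕ) : ℤ)) = 0 := by
            rw [intChoose, if_neg (by omega)]
          have hz2 : intChoose ((k : ℤ) - 2 - ((i : ℕ) : ℤ)) ((j : ℕ) : ℤ) = 0 := by
            rw [intChoose, if_neg (by omega)]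
          simp only [Int.cast_add, Int.cast_mul, Int.cast_pow, Int.cast_neg, Int.cast_one]
          rw [hcong (i : ℕ) _ hi hjlt', hcong (i : ℕ) _ hi hjlt, hz1, hz2]
          simp
        · rw [if_neg hdvd]
      simp only [Umat, Matrix.of_apply]
      rw [hz]
      exact dvd_zero _


end DrinfeldGM
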